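/- Existence of an i-compatible causal model: for every recursive CBN M there exists a probabilistic causal model (M', Pr') i-compatible with M, obtained by adding for each endogenous variable Y with parents X1,...,Xn a new exogenous variable U_Y ranging over all functions f : R(X1)×···×R(Xn) → R(Y), setting F_Y(x1,...,xn,f) = f(x1,...,xn), and taking Pr'(u, f1,...,fm) = Pr(u) · Π_i Pr_{Y_i}(f_i) where Pr_{Y_i}(f) = Π_{(x1,...,xn)} P(Y_i = f(x1,...,xn) | X1=x1,...,Xn=xn). -/

import Mathlib

/-- A causal Bayesian network over exogenous variables `U`, endogenous
variables `V`, all ranging over `α`: a parent function, a cpt for each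
endogenous variable (probability of each value given each parent setting),
and a joint distribution on settings of the exogenous variables. -/
structure CBN (U V α : Type) where
  pa : V → Finset (U ⊕ V)
  cpt : (Y : V) → ({z // z ∈ pa Y} → α) → α → ℝ
  prU : (U → α) → ℝ

/-- The dag of the CBN is acyclic. -/
def CBN.Acyclic {U V α : Type} (N : CBN U V α) : Prop :=
  ∀ Y : V, ¬ Relation.TransGen (fun A B : V => Sum.inr A ∈ N.pa B) Y Y

/-- A functional causal model whose exogenous variables are those of the CBN
(`U`) together with arbitrary extra exogenous variables `W`; a context is a
pair of a setting of the `U`'s and a value of `W`. -/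
structure CM (U W V α : Type) where
  F : V → ((U → α) × W) → (V → α) → α

def Solves {U W V α : Type} (M : CM U W V α) (e : (U → α) × W) (s : V → α) : Prop :=
  ∀ X, s X = M.F X e s

/-- `M` is recursive (acyclic). -/
def Recursive {U W V α : Type} (M : CM U W V α) : Prop :=
  ∃ r : V → V → Prop, IsStrictTotalOrder V r ∧
    ∀ X Y, r X Y → ∀ e s s', (∀ Z, Z ≠ Y → s Z = s' Z) → M.F X e s = M.F X e s'

/-- `M` has the same type as the CBN `N`: the equation for each endogenous
variable depends only on the parents of that variable in `N` (and possibly on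
the extra exogenous variables `W`). -/
def SameType {U W V α : Type} (N : CBN U V α) (M : CM U W V α) : Prop :=
  ∀ (Y : V) (cu cu' : U → α) (w : W) (s s' : V → α),
    (∀ u, Sum.inl u ∈ N.pa Y → cu u = cu' u) →
    (∀ Z, Sum.inr Z ∈ N.pa Y → s Z = s' Z) →
    M.F Y (cu, w) s = M.F Y (cu', w) s'

/-- Formulas of the language L⁺: primitive events `Z = x` for `Z` an exogenous
or endogenous variable, Boolean combinations, and interventions (possibly on
exogenous variables). -/
inductive Formula (U V α : Type) where
  | eq  : U ⊕ V → α → Formula U V α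
  | neg : Formula U V α → Formula U V α
  | and : Formula U V α → Formula U V α → Formula U V α
  | or  : Formula U V α → Formula U V α → Formula U V α
  | int : (U ⊕ V → Option α) → Formula U V α → Formula U V α

/-- Intervene on the endogenous variables mentioned by `I`. -/
def intervene {U W V α : Type} (M : CM U W V α) (I : U ⊕ V → Option α) :
    CM U W V α :=
  ⟨fun X e s => (I (Sum.inr X)).getD (M.F X e s)⟩

/-- Intervene on the exogenous variables mentioned by `I` (override the context). -/
def intervCtx {U W V α : Type} (I : U ⊕ V → Option α) (e : (U → α) × W) :
    (U → α) × W :=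
  (fun u => (I (Sum.inl u)).getD (e.1 u), e.2)

/-- Satisfaction of a formula in a causal setting `(M, e)`. -/
def Sat {U W V α : Type} : CM U W V α → ((U → α) × W) → Formula U V α → Prop
  | _, e, .eq (Sum.inl u) x => e.1 u = x
  | M, e, .eq (Sum.inr X) x => ∀ s, Solves M e s → s X = x
  | M, e, .neg φ => ¬ Sat M e φ
  | M, e, .and φ ψ => Sat M e φ ∧ Sat M e ψ
  | M, e, .or φ ψ => Sat M e φ ∨ Sat M e ψ
  | M, e, .int I φ => Sat (intervene M I) (intervCtx I e) φ

open Classical in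
/-- The intervention setting the parents of `Y` to the setting `c`. -/
noncomputable def paInt {U V α : Type} (N : CBN U V α) (Y : V) (c : {z // z ∈ N.pa Y} → α) :
    U ⊕ V → Option α :=
  fun z => if h : z ∈ N.pa Y then some (c ⟨z, h⟩) else none

/-- The probability of a set of contexts under the distribution `p`. -/
noncomputable def PrOf {E : Type} [Fintype E] (p : E → ℝ) (S : Set E) : ℝ :=
  ∑ e, S.indicator p e

/-- `p` is a probability distribution. -/
def IsDist {E : Type} [Fintype E] (p : E → ℝ) : Prop :=
  (∀ e, 0 ≤ p e) ∧ ∑ e, p e = 1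

/-- Mutual independence of a family of families of events: for every finite
collection of indices and every choice of one event per index, the probability
of the intersection is the product of the probabilities. -/
def MutIndep {E : Type} [Fintype E] {ι : Type} {κ : ι → Type} (p : E → ℝ)
    (ev : (i : ι) → κ i → Set E) : Prop :=
  ∀ (s : Finset ι) (f : (i : ι) → κ i),
    PrOf p (⋂ i ∈ s, ev i (f i)) = ∏ i ∈ s, PrOf p (ev i (f i))

/-- Index type for the family of conditional events of the CBN `N`: the
(joint) exogenous context, and one index for each endogenous variable and
each setting of its parents. -/
def Idx {U V α : Type} (N : CBN U V α) : Type :=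
  Option ((Y : V) × ({z // z ∈ N.pa Y} → α))

/-- What is chosen at each index: a joint exogenous setting, resp. a value of
the endogenous variable. -/
def IdxChoice {U V α : Type} (N : CBN U V α) : Idx N → Type
  | none => U → α
  | some _ => α

/-- The event corresponding to an index and a choice: the exogenous context is
the chosen one, resp. the intervention formula `[Pa(Y)←c](Y = y)` holds. -/
noncomputable def evFam {U V W α : Type} (N : CBN U V α) (M : CM U W V α) :
    (i : Idx N) → IdxChoice N i → Set ((U → α) × W)
  | none, cu => {e | e.1 = cu}
  | some ⟨Y, c⟩, y => {e | Sat M e (.int (paInt N Y c) (.eq (Sum.inr Y) y))}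

/-- `(M, p)` is a probabilistic causal model compatible with the CBN `N`:
`M` is a recursive model of the same type as `N`, `p` is a distribution whose
marginal on the exogenous variables of `N` is `N.prU`, and each cpt entry of
`N` is the probability of the corresponding intervention formula. -/
noncomputable def Compatible {U W V α : Type} [DecidableEq U] [Fintype U] [Fintype W] [Fintype α]
    (N : CBN U V α) (M : CM U W V α) (p : ((U → α) × W) → ℝ) : Prop :=
  SameType N M ∧ Recursive M ∧ IsDist p ∧
    (∀ cu : U → α, PrOf p (evFam N M none cu) = N.prU cu) ∧
    (∀ (Y : V) (c : {z // z ∈ N.pa Y} → α) (y : α),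
      PrOf p (evFam N M (some ⟨Y, c⟩) y) = N.cpt Y c y)

/-- `(M, p)` is i-compatible with `N`: compatible, and moreover the events
corresponding to the cpt entries — ranging over different variables and over
different parent settings of the same variable — together with the exogenous
context, are mutually independent. -/
noncomputable def ICompatible {U W V α : Type} [DecidableEq U] [Fintype U] [Fintype W] [Fintype α]
    (N : CBN U V α) (M : CM U W V α) (p : ((U → α) × W) → ℝ) : Prop :=
  Compatible N M p ∧ MutIndep p (evFam N M)

/-- The response-function exogenous variables: for each endogenous `Y`, a
function from settings of the parents of `Y` to values of `Y`. -/
def RespW {U V α : Type} (N : CBN U V α) : Type :=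
  (Y : V) → ({z // z ∈ N.pa Y} → α) → α

instance {U V α : Type} [DecidableEq U] [DecidableEq V] [Fintype U] [Fintype V]
    [Fintype α] [DecidableEq α] (N : CBN U V α) : Fintype (RespW N) :=
  inferInstanceAs (Fintype ((Y : V) → ({z // z ∈ N.pa Y} → α) → α))

/-! ### Auxiliary material for the proof of Statement 11 -/

section Stmt11Aux

variable {U V α : Type} [DecidableEq U] [DecidableEq V] [DecidableEq α]
  [Fintype U] [Fintype V] [Fintype α] [Nonempty α]

/-- The edge relation of the CBN. -/
def st11Edge (N : CBN U V α) (A B : V) : Prop := Sum.inr A ∈ N.pa B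

lemma st11Edge_wf (N : CBN U V α) (hA : N.Acyclic) : WellFounded (st11Edge N) := by
  have h2 : IsIrrefl V (Relation.TransGen (st11Edge N)) := ⟨hA⟩
  have h1 : IsTrans V (Relation.TransGen (st11Edge N)) := inferInstance
  exact Subrelation.wf (fun h => Relation.TransGen.single h)
    (Finite.wellFounded_of_trans_of_irrefl _)

/-- The canonical causal model of the CBN. -/
def st11CM (N : CBN U V α) : CM U (RespW N) V α :=
  ⟨fun Y e s => e.2 Y (fun z => Sum.elim e.1 s z.val)⟩

/-- A solution of any intervened version of `st11CM`. -/
noncomputable def st11Sol (N : CBN U V α) (hA : N.Acyclic) (I : U ⊕ V → Option α)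
    (e : (U → α) × RespW N) : V → α :=
  (st11Edge_wf N hA).fix (fun Y ih =>
    (I (Sum.inr Y)).getD (e.2 Y (fun z =>
      match z with
      | ⟨Sum.inl u, _⟩ => e.1 u
      | ⟨Sum.inr Z, h⟩ => ih Z h)))

lemma st11Sol_solves (N : CBN U V α) (hA : N.Acyclic) (I : U ⊕ V → Option α)
    (e : (U → α) × RespW N) : Solves (intervene (st11CM N) I) e (st11Sol N hA I e) := by
  intro Y
  show st11Sol N hA I e Y = (I (Sum.inr Y)).getD
    (e.2 Y (fun z => Sum.elim e.1 (st11Sol N hA I e) z.val))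
  rw [st11Sol, WellFounded.fix_eq]
  refine congrArg _ (congrArg _ ?_)
  funext z
  rcases z with ⟨z, hz⟩
  cases z <;> rfl

/-- Any solution of the model intervened on `paInt N Y c` gives `Y` the
value `e.2 Y c`. -/
lemma st11_sol_val (N : CBN U V α) (hA : N.Acyclic) (Y : V) (c : {z // z ∈ N.pa Y} → α)
    (e : (U → α) × RespW N) (s : V → α)
    (hs : Solves (intervene (st11CM N) (paInt N Y c)) (intervCtx (paInt N Y c) e) s) :
    s Y = e.2 Y c := by
  set I := paInt N Y c with hI
  have hYY : Sum.inr Y ∉ N.pa Y := fun h => hA Y (Relation.TransGen.single h)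
  have hInone : I (Sum.inr Y) = none := dif_neg hYY
  have harg : (fun z : {z // z ∈ N.pa Y} =>
      Sum.elim (intervCtx I e).1 s z.val) = c := by
    funext z
    rcases z with ⟨z, hz⟩
    cases z with
    | inl u =>
      show (I (Sum.inl u)).getD (e.1 u) = c ⟨Sum.inl u, hz⟩
      rw [hI]; show (paInt N Y c (Sum.inl u)).getD (e.1 u) = _
      rw [paInt, dif_pos hz]; rfl
    | inr Z =>
      show s Z = c ⟨Sum.inr Z, hz⟩
      rw [hs Z]
      show (I (Sum.inr Z)).getD _ = _
      rw [hI]; show (paInt N Y c (Sum.inr Z)).getD _ = _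
      rw [paInt, dif_pos hz]; rfl
  have := hs Y
  rw [this]
  show (I (Sum.inr Y)).getD
    ((intervCtx I e).2 Y (fun z => Sum.elim (intervCtx I e).1 s z.val)) = e.2 Y c
  rw [hInone, Option.getD_none, harg]
  rfl

lemma st11_sat_char (N : CBN U V α) (hA : N.Acyclic) (Y : V) (c : {z // z ∈ N.pa Y} → α)
    (y : α) (e : (U → α) × RespW N) :
    Sat (st11CM N) e (.int (paInt N Y c) (.eq (Sum.inr Y) y)) ↔ e.2 Y c = y := by
  show (∀ s, Solves (intervene (st11CM N) (paInt N Y c)) (intervCtx (paInt N Y c) e) s →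
      s Y = y) ↔ e.2 Y c = y
  constructor
  · intro h
    have h1 := h _ (st11Sol_solves N hA (paInt N Y c) (intervCtx (paInt N Y c) e))
    have h2 := st11_sol_val N hA Y c e _ (st11Sol_solves N hA _ _)
    rw [← h1, h2]
  · intro h s hs
    rw [st11_sol_val N hA Y c e s hs, h]

/-- The sigma type indexing the cpt entries. -/
abbrev st11J (N : CBN U V α) : Type := (Y : V) × ({z // z ∈ N.pa Y} → α)

/-- The simple description of the events `evFam`. -/
def st11Ev (N : CBN U V α) : (i : Idx N) → IdxChoice N i → Set ((U → α) × RespW N)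
  | none, cu => {e | e.1 = cu}
  | some j, y => {e | e.2 j.1 j.2 = y}

lemma st11_evFam_eq (N : CBN U V α) (hA : N.Acyclic) :
    evFam N (st11CM N) = st11Ev N := by
  funext i
  match i with
  | none => rfl
  | some j =>
    obtain ⟨Y, c⟩ := j
    funext y
    ext e
    exact st11_sat_char N hA Y c y e

/-- Uncurrying equivalence for response functions. -/
def st11Eqv (N : CBN U V α) : ((x : st11J N) → α) ≃ RespW N :=
  Equiv.piCurry (fun (_ : V) (_ : {z // z ∈ N.pa _} → α) => α)

/-- The product distribution. -/
noncomputable def st11p (N : CBN U V α) (e : (U → α) × RespW N) : ℝ :=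
  N.prU e.1 * ∏ Y, ∏ c, N.cpt Y c (e.2 Y c)

open Classical in
/-- The master computation: probability of a cylinder event. -/
lemma st11_master (N : CBN U V α)
    (hcpt : ∀ (Y : V) (c : {z // z ∈ N.pa Y} → α),
      (∀ y, 0 ≤ N.cpt Y c y) ∧ ∑ y, N.cpt Y c y = 1)
    (hprU : ∑ cu, N.prU cu = 1)
    (s : Finset (Idx N)) (f : ∀ i, IdxChoice N i) :
    PrOf (st11p N) (⋂ i ∈ s, st11Ev N i (f i)) =
      (if none ∈ s then N.prU (f none) else 1) *
        ∏ j ∈ Finset.eraseNone s, N.cpt j.1 j.2 (f (some j)) := by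
  classical
  set s' : Finset (st11J N) := Finset.eraseNone s with hs'
  have hmem : ∀ e : (U → α) × RespW N,
      e ∈ (⋂ i ∈ s, st11Ev N i (f i)) ↔
        ((none ∈ s → e.1 = f none) ∧ ∀ j ∈ s', e.2 j.1 j.2 = f (some j)) := by
    intro e
    simp only [Set.mem_iInter]
    constructor
    · intro h
      exact ⟨fun hn => h none hn, fun j hj => h (some j) (Finset.mem_eraseNone.mp hj)⟩
    · rintro ⟨h1, h2⟩ i hi
      match i with
      | none => exact h1 hi
      | some j => exact h2 j (Finset.mem_eraseNone.mpr hi)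
  have hind : ∀ e : (U → α) × RespW N,
      (⋂ i ∈ s, st11Ev N i (f i)).indicator (st11p N) e =
        (if (none ∈ s → e.1 = f none) then N.prU e.1 else 0) *
          (if (∀ j ∈ s', e.2 j.1 j.2 = f (some j)) then
            ∏ Y, ∏ c, N.cpt Y c (e.2 Y c) else 0) := by
    intro e
    by_cases h1 : (none ∈ s → e.1 = f none) <;>
      by_cases h2 : (∀ j ∈ s', e.2 j.1 j.2 = f (some j))
    · rw [Set.indicator_of_mem ((hmem e).mpr ⟨h1, h2⟩), if_pos h1, if_pos h2]; rfl
    · rw [Set.indicator_of_notMem (fun hc => h2 ((hmem e).mp hc).2), if_neg h2, mul_zero]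
    · rw [Set.indicator_of_notMem (fun hc => h1 ((hmem e).mp hc).1), if_neg h1, zero_mul]
    · rw [Set.indicator_of_notMem (fun hc => h1 ((hmem e).mp hc).1), if_neg h1, zero_mul]
  rw [PrOf]
  rw [Fintype.sum_prod_type]
  simp only [hind]
  rw [← Finset.sum_mul_sum]
  have hA1 : (∑ cu : U → α, if (none ∈ s → cu = f none) then N.prU cu else 0) =
      (if none ∈ s then N.prU (f none) else 1) := by
    by_cases hn : none ∈ s
    · have : ∀ cu : U → α, (if (none ∈ s → cu = f none) then N.prU cu else 0) =
          (if cu = f none then N.prU cu else 0) := by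
        intro cu; simp [hn]
      simp only [this]
      have h := Finset.sum_ite_eq' (Finset.univ : Finset (U → α)) (f none) N.prU
      rw [if_pos hn]
      convert h.trans (if_pos (Finset.mem_univ _))
    · simp [hn, hprU]
  have hB : (∑ w : RespW N, if (∀ j ∈ s', w j.1 j.2 = f (some j)) then
        ∏ Y, ∏ c, N.cpt Y c (w Y c) else 0) =
      ∏ j ∈ s', N.cpt j.1 j.2 (f (some j)) := by
    rw [← Equiv.sum_comp (st11Eqv N)]
    show (∑ g : st11J N → α, if (∀ j ∈ s', g j = f (some j)) then
        ∏ Y, ∏ c, N.cpt Y c (g ⟨Y, c⟩) else 0) = ∏ j ∈ s', N.cpt j.1 j.2 (f (some j))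
    have key : ∀ g : (x : st11J N) → α,
        (if (∀ j ∈ s', g j = f (some j)) then
          ∏ Y, ∏ c, N.cpt Y c (g ⟨Y, c⟩) else 0) =
        ∏ j : st11J N,
          ((if j ∈ s' then (if g j = f (some j) then 1 else 0) else 1) *
            N.cpt j.1 j.2 (g j)) := by
      intro g
      have hq : (∏ Y, ∏ c, N.cpt Y c (g ⟨Y, c⟩)) = ∏ j : st11J N, N.cpt j.1 j.2 (g j) := by
        rw [← Finset.univ_sigma_univ,
          Finset.prod_sigma Finset.univ (fun _ => Finset.univ)
            (fun j : st11J N => N.cpt j.1 j.2 (g j))]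
      rw [Finset.prod_mul_distrib, Fintype.prod_ite_mem, Finset.prod_boole, boole_mul, hq]
      congr
    simp only [key]
    have exch := Finset.prod_univ_sum (fun _ : st11J N => (Finset.univ : Finset α))
      (fun j y => (if j ∈ s' then (if y = f (some j) then 1 else 0) else 1) *
        N.cpt j.1 j.2 y)
    rw [Fintype.piFinset_univ] at exch
    rw [← exch]
    have hsum : ∀ j : st11J N,
        (∑ y : α, ((if j ∈ s' then (if y = f (some j) then 1 else 0) else 1) *
          N.cpt j.1 j.2 y)) = (if j ∈ s' then N.cpt j.1 j.2 (f (some j)) else 1) := by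
      intro j
      by_cases hj : j ∈ s'
      · simp only [hj, if_true, boole_mul]
        have h := Finset.sum_ite_eq' (Finset.univ : Finset α) (f (some j)) (N.cpt j.1 j.2)
        convert h.trans (if_pos (Finset.mem_univ _))
      · simp [hj, (hcpt j.1 j.2).2]
    simp only [hsum]
    rw [Fintype.prod_ite_mem]
  rw [hA1, hB]

/-- Default index choice. -/
noncomputable def st11Fnone (N : CBN U V α) (cu : U → α) : ∀ i : Idx N, IdxChoice N i
  | none => cu
  | some _ => Classical.arbitrary α

/-- Index choice concentrated on a value `y`. -/
noncomputable def st11Fsome (N : CBN U V α) (y : α) : ∀ i : Idx N, IdxChoice N i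
  | none => fun _ => Classical.arbitrary α
  | some _ => y

open Classical in
lemma st11_prod_option {β : Type} (s : Finset (Option β)) (g : Option β → ℝ) :
    (∏ i ∈ s, g i) = (if none ∈ s then g none else 1) *
      ∏ j ∈ Finset.eraseNone s, g (some j) := by
  classical
  by_cases hn : none ∈ s
  · rw [if_pos hn, ← Finset.mul_prod_erase s g hn]
    congr 1
    rw [← Finset.map_some_eraseNone s, Finset.prod_map]
    rfl
  · rw [if_neg hn, one_mul]
    conv_lhs => rw [← Finset.erase_eq_of_notMem hn, ← Finset.map_some_eraseNone s]
    rw [Finset.prod_map]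
    rfl

lemma st11_PrOf_none (N : CBN U V α)
    (hcpt : ∀ (Y : V) (c : {z // z ∈ N.pa Y} → α),
      (∀ y, 0 ≤ N.cpt Y c y) ∧ ∑ y, N.cpt Y c y = 1)
    (hprU2 : ∑ cu, N.prU cu = 1) (cu : U → α) :
    PrOf (st11p N) (st11Ev N none cu) = N.prU cu := by
  have h := st11_master N hcpt hprU2 ({none} : Finset (Option (st11J N))) (st11Fnone N cu)
  refine Eq.trans ?_ (h.trans ((congrArg₂ (· * ·) (if_pos (Finset.mem_singleton_self _))
    (by rw [Finset.eraseNone_none, Finset.prod_empty] : _ = (1 : ℝ))).trans (mul_one _)))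
  exact congrArg _
    (Finset.set_biInter_singleton (none : Option (st11J N)) fun i => st11Ev N i (st11Fnone N cu i)).symm

lemma st11_PrOf_some (N : CBN U V α)
    (hcpt : ∀ (Y : V) (c : {z // z ∈ N.pa Y} → α),
      (∀ y, 0 ≤ N.cpt Y c y) ∧ ∑ y, N.cpt Y c y = 1)
    (hprU2 : ∑ cu, N.prU cu = 1) (j : st11J N) (y : α) :
    PrOf (st11p N) (st11Ev N (some j) y) = N.cpt j.1 j.2 y := by
  classical
  have h := st11_master N hcpt hprU2 ({some j} : Finset (Option (st11J N))) (st11Fsome N y)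
  have he : Finset.eraseNone ({some j} : Finset (Option (st11J N))) = {j} := by
    ext x; simp
  rw [he] at h
  refine Eq.trans ?_ (h.trans ((congrArg₂ (· * ·) (if_neg ?_)
    (Finset.prod_singleton _ _)).trans (one_mul _)))
  · exact congrArg _
      (Finset.set_biInter_singleton (some j) fun i => st11Ev N i (st11Fsome N y i)).symm
  · intro hh; cases Finset.mem_singleton.mp hh

lemma st11_sum_one (N : CBN U V α)
    (hcpt : ∀ (Y : V) (c : {z // z ∈ N.pa Y} → α),
      (∀ y, 0 ≤ N.cpt Y c y) ∧ ∑ y, N.cpt Y c y = 1)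
    (hprU2 : ∑ cu, N.prU cu = 1) :
    ∑ e, st11p N e = 1 := by
  have h := st11_master N hcpt hprU2 (∅ : Finset (Option (st11J N)))
    (st11Fnone N (fun _ => Classical.arbitrary α))
  replace h := h.trans ((congrArg₂ (· * ·) (if_neg (Finset.notMem_empty _))
    (by rw [Finset.eraseNone_empty, Finset.prod_empty] : _ = (1 : ℝ))).trans (one_mul _))
  rw [← h, PrOf]
  apply Finset.sum_congr rfl
  intro e _
  rw [Set.indicator_of_mem]
  exact Set.mem_iInter₂.mpr fun i hi => absurd hi (Finset.notMem_empty i)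

end Stmt11Aux

/-- existence of an i-compatible causal model: for every
recursive CBN `N` there is a probabilistic causal model i-compatible with `N`,
obtained by adding for each endogenous `Y` a response-function variable,
setting `F_Y(e, s) = e.2 Y (values of the parents of Y)`, and taking the
probability to be the product of `N.prU` with the product, over all variables
and parent settings, of the corresponding cpt entries. -/
theorem stmt11 {U V α : Type} [DecidableEq U] [DecidableEq V] [DecidableEq α]
    [Fintype U] [Fintype V] [Fintype α] [Nonempty α]
    (N : CBN U V α) (hA : N.Acyclic)
    (hcpt : ∀ (Y : V) (c : {z // z ∈ N.pa Y} → α),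
      (∀ y, 0 ≤ N.cpt Y c y) ∧ ∑ y, N.cpt Y c y = 1)
    (hprU : (∀ cu, 0 ≤ N.prU cu) ∧ ∑ cu, N.prU cu = 1) :
    ∃ (M : CM U (RespW N) V α) (p : ((U → α) × RespW N) → ℝ),
      ICompatible N M p ∧
      (∀ (Y : V) (e : (U → α) × RespW N) (s : V → α),
        M.F Y e s = e.2 Y (fun z => Sum.elim e.1 s z.val)) ∧
      (∀ (cu : U → α) (w : RespW N),
        p (cu, w) = N.prU cu * ∏ Y, ∏ c, N.cpt Y c (w Y c)) := by
  classical
  have hev : evFam N (st11CM N) = st11Ev N := st11_evFam_eq N hA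
  refine ⟨st11CM N, st11p N, ⟨⟨?_, ?_, ?_, ?_, ?_⟩, ?_⟩, fun Y e s => rfl, fun cu w => rfl⟩
  · -- SameType
    intro Y cu cu' w s s' h1 h2
    show w Y (fun z => Sum.elim cu s z.val) = w Y (fun z => Sum.elim cu' s' z.val)
    refine congrArg _ ?_
    funext z
    rcases z with ⟨z, hz⟩
    cases z with
    | inl u => exact h1 u hz
    | inr Z => exact h2 Z hz
  · -- Recursive
    set rp : V → V → Prop :=
      fun a b => Relation.TransGen (st11Edge N) a b ∨ a = b with hrp
    haveI hpo : IsPartialOrder V rp :=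
      { refl := fun a => Or.inr rfl
        trans := by
          rintro a b c (hab | rfl) (hbc | rfl)
          · exact Or.inl (hab.trans hbc)
          · exact Or.inl hab
          · exact Or.inl hbc
          · exact Or.inr rfl
        antisymm := by
          rintro a b (hab | rfl) (hba | hba)
          · exact absurd (hab.trans hba) (hA a)
          · exact hba.symm
          · rfl
          · rfl }
    obtain ⟨rl, hrl, hle⟩ := extend_partialOrder rp
    haveI := hrl
    refine ⟨fun a b => rl a b ∧ a ≠ b, ?_, ?_⟩
    · refine { trichotomous := ?_, irrefl := fun a h => h.2 rfl, trans := ?_ }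
      · intro a b
        by_cases hab : a = b
        · exact fun _ _ => hab
        · rcases total_of rl a b with h | h
          · exact fun h1 _ => absurd ⟨h, hab⟩ h1
          · exact fun _ h2 => absurd ⟨h, fun he => hab he.symm⟩ h2
      · rintro a b c ⟨h1, hne1⟩ ⟨h2, hne2⟩
        refine ⟨_root_.trans h1 h2, fun he => ?_⟩
        subst he
        exact hne2 (antisymm h2 h1)
    · rintro X Y ⟨hXY, hneXY⟩ e s s' hss
      have hYX : Sum.inr Y ∉ N.pa X := by
        intro h
        have h2 : rl Y X := hle _ _ (Or.inl (Relation.TransGen.single h))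
        exact hneXY (antisymm hXY h2)
      show e.2 X (fun z => Sum.elim e.1 s z.val) = e.2 X (fun z => Sum.elim e.1 s' z.val)
      refine congrArg _ ?_
      funext z
      rcases z with ⟨z, hz⟩
      cases z with
      | inl u => rfl
      | inr Z =>
        refine hss Z ?_
        rintro rfl
        exact hYX hz
  · -- IsDist
    refine ⟨fun e => mul_nonneg (hprU.1 e.1)
      (Finset.prod_nonneg fun Y _ => Finset.prod_nonneg fun c _ => (hcpt Y c).1 _),
      st11_sum_one N hcpt hprU.2⟩
  · -- marginal on U
    intro cu
    rw [hev]
    exact st11_PrOf_none N hcpt hprU.2 cu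
  · -- cpt entries
    intro Y c y
    rw [hev]
    exact st11_PrOf_some N hcpt hprU.2 ⟨Y, c⟩ y
  · -- MutIndep
    intro s f
    rw [hev]
    rw [st11_master N hcpt hprU.2 s f]
    set g : Idx N → ℝ := fun i => PrOf (st11p N) (st11Ev N i (f i)) with hg
    have hgnone : g none = N.prU (f none) := st11_PrOf_none N hcpt hprU.2 (f none)
    have hgsome : ∀ j : st11J N, g (some j) = N.cpt j.1 j.2 (f (some j)) :=
      fun j => st11_PrOf_some N hcpt hprU.2 j (f (some j))
    refine Eq.trans ?_ (st11_prod_option (β := st11J N) s g).symm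
    have hP : (∏ j ∈ Finset.eraseNone s, N.cpt j.1 j.2 (f (some j))) =
        ∏ j ∈ Finset.eraseNone s, g (some j) :=
      Finset.prod_congr rfl fun j _ => (hgsome j).symm
    rw [hP]
    split_ifs with h1
    · rw [hgnone]
    · contradiction
    · contradiction
    · rfl
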